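/- Let C be a commutative unital ring, G a semigroup with zero, R a C-algebra, and t : \overline{CG} → R a C-linear trace. Then t is minimal if and only if for all g₁,…,gₙ ∈ G such that no gᵢ satisfies gᵢ ~ 0 and gᵢ ≁ gⱼ for i ≠ j, the elements t(π(1·g₁)),…,t(π(1·gₙ)) are C-linearly independent in R (where π : CG → \overline{CG} is the quotient map and 1·g is the indicator function of g). -/

import Mathlib

/-- The one-step relation: `x = a*b` and `y = b*a`. -/
def simStep {G : Type*} [Mul G] (x y : G) : Prop := ∃ a b : G, x = a * b ∧ y = b * a

/-- The relation `~` on a semigroup: the reflexive-transitive closure of `simStep`. -/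
def sim {G : Type*} [Mul G] : G → G → Prop := Relation.ReflTransGen simStep

theorem sim_equiv {G : Type*} [Mul G] : Equivalence (sim (G := G)) :=
  ⟨fun _ => Relation.ReflTransGen.refl,
   fun h => by
      have : Std.Symm (simStep (G := G)) := ⟨fun _ _ ⟨a, b, h1, h2⟩ => ⟨b, a, h2, h1⟩⟩
      exact (Relation.ReflTransGen.stdSymm (r := simStep (G := G))).symm _ _ h,
   fun h1 h2 => Relation.ReflTransGen.trans h1 h2⟩

/-- The setoid on `G` given by `~`. -/
def simSetoid (G : Type*) [Mul G] : Setoid G := ⟨sim, sim_equiv⟩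

/-- The additive subgroup `[A,A]` generated by commutators. -/
def commutatorSubgroup (A : Type*) [NonUnitalNonAssocRing A] : AddSubgroup A :=
  AddSubgroup.closure {x | ∃ a b : A, x = a * b - b * a}

/-- The ideal `I₀` of the semigroup ring `CG` consisting of functions supported in `{0}`. -/
noncomputable def I0 (C G : Type*) [CommRing C] [SemigroupWithZero G] :
    TwoSidedIdeal (MonoidAlgebra C G) :=
  TwoSidedIdeal.mk' {f : MonoidAlgebra C G | ∀ g : G, g ≠ 0 → f.coeff g = 0}
    (fun _ _ => rfl)
    (fun {x y} hx hy g hg => by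
      show (x + y).coeff g = 0
      rw [MonoidAlgebra.coeff_add, Finsupp.add_apply, hx g hg, hy g hg, add_zero])
    (fun {x} hx g hg => by
      show (-x).coeff g = 0
      rw [MonoidAlgebra.coeff_neg, Finsupp.neg_apply, hx g hg, neg_zero])
    (fun {x y} hy g hg => by
      classical
      rw [MonoidAlgebra.coeff_mul]
      rw [Finsupp.sum]
      refine Finset.sum_eq_zero fun a _ => ?_
      rw [Finsupp.sum]
      refine Finset.sum_eq_zero fun b hb => ?_
      have hb0 : b = 0 := by
        by_contra h
        exact Finsupp.mem_support_iff.mp hb (hy b h)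
      subst hb0
      rw [mul_zero, if_neg fun h => hg h.symm])
    (fun {x y} hx g hg => by
      classical
      rw [MonoidAlgebra.coeff_mul]
      rw [Finsupp.sum]
      refine Finset.sum_eq_zero fun a ha => ?_
      rw [Finsupp.sum]
      refine Finset.sum_eq_zero fun b _ => ?_
      have ha0 : a = 0 := by
        by_contra h
        exact Finsupp.mem_support_iff.mp ha (hx a h)
      subst ha0
      rw [zero_mul, if_neg fun h => hg h.symm])

/-- The contracted semigroup ring `\overline{CG} = CG / I₀`. -/
abbrev ContractedSemigroupRing (C G : Type*) [CommRing C] [SemigroupWithZero G] :=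
  (I0 C G).ringCon.Quotient

/-- The quotient map `π : CG → \overline{CG}`. -/
noncomputable def toCSR (C G : Type*) [CommRing C] [SemigroupWithZero G]
    (f : MonoidAlgebra C G) : ContractedSemigroupRing C G := f

/-- The map `f ↦ ∑_g f(g) • δ(g)` from `CG` to `R`. -/
def elemSum (C : Type*) {G R : Type*} [CommRing C] [SemigroupWithZero G]
    [AddCommMonoid R] [Module C R] (δ : G → R) (f : MonoidAlgebra C G) : R :=
  f.coeff.sum fun g c => c • δ g

section Aux

variable {C G : Type*} [CommRing C] [SemigroupWithZero G]

lemma sim_refl {G : Type*} [Mul G] (a : G) : sim a a := Relation.ReflTransGen.refl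
lemma sim_symm {G : Type*} [Mul G] {a b : G} (h : sim a b) : sim b a := sim_equiv.symm h
lemma sim_trans {G : Type*} [Mul G] {a b c : G} (h1 : sim a b) (h2 : sim b c) : sim a c :=
  Relation.ReflTransGen.trans h1 h2
lemma sim_mul_comm {G : Type*} [Mul G] (a b : G) : sim (a * b) (b * a) :=
  Relation.ReflTransGen.single ⟨a, b, rfl, rfl⟩

/-- The quotient map as an `AddMonoidHom`. -/
noncomputable def piHom (C G : Type*) [CommRing C] [SemigroupWithZero G] :
    MonoidAlgebra C G →+ ContractedSemigroupRing C G :=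
  AddMonoidHom.mk' (toCSR C G) (fun a b => (I0 C G).ringCon.coe_add a b)

lemma toCSR_mul (x y : MonoidAlgebra C G) :
    toCSR C G (x * y) = toCSR C G x * toCSR C G y := rfl

lemma toCSR_zero : toCSR C G (0 : MonoidAlgebra C G) = 0 := rfl

lemma toCSR_single_zero (c : C) : toCSR C G (MonoidAlgebra.single (0 : G) c) = 0 := by
  have hmem : MonoidAlgebra.single (0 : G) c ∈ I0 C G := by
    rw [I0]
    refine (TwoSidedIdeal.mem_mk' _ _ _ _ _ _ _).mpr ?_
    intro g hg
    exact Finsupp.single_eq_of_ne' (Ne.symm hg)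
  have hrel : (I0 C G).ringCon (MonoidAlgebra.single (0 : G) c) 0 :=
    ((I0 C G).rel_iff _ _).mpr (by simpa using hmem)
  exact Quotient.sound' hrel

lemma mem_comm_of_sim {g h : G} (hs : sim g h) (c : C) :
    toCSR C G (MonoidAlgebra.single g c) - toCSR C G (MonoidAlgebra.single h c) ∈
      commutatorSubgroup (ContractedSemigroupRing C G) := by
  induction hs with
  | refl => simpa using (commutatorSubgroup (ContractedSemigroupRing C G)).zero_mem
  | @tail m h' hgm step ih =>
    obtain ⟨a, b, hm, hh⟩ := step
    subst hm; subst hh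
    have h2 : toCSR C G (MonoidAlgebra.single (a * b) c)
        - toCSR C G (MonoidAlgebra.single (b * a) c) ∈
        commutatorSubgroup (ContractedSemigroupRing C G) := by
      have e1 : MonoidAlgebra.single (a * b) c
          = MonoidAlgebra.single a c * MonoidAlgebra.single b (1 : C) := by
        rw [MonoidAlgebra.single_mul_single, mul_one]
      have e2 : MonoidAlgebra.single (b * a) c
          = MonoidAlgebra.single b (1 : C) * MonoidAlgebra.single a c := by
        rw [MonoidAlgebra.single_mul_single, one_mul]
      rw [e1, e2, toCSR_mul, toCSR_mul]
      exact AddSubgroup.subset_closure ⟨_, _, rfl⟩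
    have h3 := add_mem ih h2
    rwa [sub_add_sub_cancel] at h3

open Classical in
/-- Class-sum map: sum of coefficients over the `sim`-class of `g₀`. -/
noncomputable def classSumHom (g₀ : G) : MonoidAlgebra C G →+ C :=
  AddMonoidHom.mk' (fun f => f.coeff.sum fun h c => if sim h g₀ then c else 0)
    (fun a b => Finsupp.sum_add_index' (fun _ => ite_self 0)
      (fun h b₁ b₂ => by by_cases hs : sim h g₀ <;> simp [hs]))

open Classical in
lemma classSumHom_apply (g₀ : G) (f : MonoidAlgebra C G) :
    classSumHom (C := C) g₀ f = f.coeff.sum fun h c => if sim h g₀ then c else 0 := rfl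

open Classical in
lemma classSumHom_single (g₀ h : G) (c : C) :
    classSumHom (C := C) g₀ (MonoidAlgebra.single h c) = if sim h g₀ then c else 0 := by
  rw [classSumHom_apply]
  exact Finsupp.sum_single_index (ite_self 0)

lemma classSumHom_mul_comm (g₀ : G) (a b : MonoidAlgebra C G) :
    classSumHom (C := C) g₀ (a * b) = classSumHom (C := C) g₀ (b * a) := by
  classical
  rw [MonoidAlgebra.mul_def, MonoidAlgebra.mul_def]
  simp only [map_finsuppSum, classSumHom_single]
  simp only [Finsupp.sum]
  rw [Finset.sum_comm]
  refine Finset.sum_congr rfl fun h _ => Finset.sum_congr rfl fun g _ => ?_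
  have hiff : sim (g * h) g₀ ↔ sim (h * g) g₀ :=
    ⟨fun hs => sim_trans (sim_mul_comm h g) hs, fun hs => sim_trans (sim_mul_comm g h) hs⟩
  rw [mul_comm (b.coeff h) (a.coeff g)]
  exact if_congr hiff rfl rfl

lemma classSumHom_eq_zero_of_mem_I0 {g₀ : G} (hg : ¬ sim g₀ 0)
    {x : MonoidAlgebra C G} (hx : x ∈ I0 C G) : classSumHom (C := C) g₀ x = 0 := by
  rw [I0] at hx
  replace hx := (TwoSidedIdeal.mem_mk' _ _ _ _ _ _ _).mp hx
  rw [classSumHom_apply, Finsupp.sum]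
  refine Finset.sum_eq_zero fun h hh => ?_
  have h0 : h = 0 := by
    by_contra hne
    exact Finsupp.mem_support_iff.mp hh (hx h hne)
  subst h0
  rw [if_neg (fun hs => hg (sim_symm hs))]

lemma classSumHom_eq_zero_of_mem_comm {g₀ : G}
    {x : MonoidAlgebra C G} (hx : x ∈ commutatorSubgroup (MonoidAlgebra C G)) :
    classSumHom (C := C) g₀ x = 0 := by
  induction hx using AddSubgroup.closure_induction with
  | mem y hy =>
    obtain ⟨a, b, rfl⟩ := hy
    rw [map_sub, classSumHom_mul_comm, sub_self]
  | zero => exact map_zero _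
  | add y z _ _ hy hz => rw [map_add, hy, hz, add_zero]
  | neg y _ hy => rw [map_neg, hy, neg_zero]

lemma exists_lift_of_mem_comm (x : MonoidAlgebra C G)
    (hx : toCSR C G x ∈ commutatorSubgroup (ContractedSemigroupRing C G)) :
    ∃ k ∈ commutatorSubgroup (MonoidAlgebra C G), x - k ∈ I0 C G := by
  have hle : commutatorSubgroup (ContractedSemigroupRing C G) ≤
      AddSubgroup.map (piHom C G) (commutatorSubgroup (MonoidAlgebra C G)) := by
    rw [commutatorSubgroup, AddSubgroup.closure_le]
    rintro _ ⟨u, v, rfl⟩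
    induction u using Quotient.inductionOn with | h a => ?_
    induction v using Quotient.inductionOn with | h b => ?_
    exact ⟨a * b - b * a, AddSubgroup.subset_closure ⟨a, b, rfl⟩, by rw [map_sub]; rfl⟩
  obtain ⟨k, hk, hpk⟩ := hle hx
  refine ⟨k, hk, ?_⟩
  have hrel : (I0 C G).ringCon k x := Quotient.exact' hpk
  have := ((I0 C G).rel_iff k x).mp hrel
  simpa using neg_mem this

lemma t_sub {A R : Type*} [NonUnitalRing A] [NonUnitalRing R] (t : A → R)
    (hadd : ∀ x y, t (x + y) = t x + t y) (x y : A) : t (x - y) = t x - t y := by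
  have h0 : t 0 = 0 := by
    have h := hadd 0 0
    rw [add_zero] at h
    exact (left_eq_add.mp h)
  have hneg : ∀ z, t (-z) = - t z := by
    intro z
    have h := hadd z (-z)
    rw [add_neg_cancel, h0] at h
    exact eq_neg_of_add_eq_zero_right h.symm
  rw [sub_eq_add_neg, hadd, hneg, sub_eq_add_neg]

lemma trace_vanish_on_comm {A R : Type*} [NonUnitalRing A] [NonUnitalRing R]
    (t : A → R) (hadd : ∀ x y, t (x + y) = t x + t y)
    (htr : ∀ x y, t (x * y) = t (y * x)) :
    ∀ y ∈ commutatorSubgroup A, t y = 0 := by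
  have h0 : t 0 = 0 := by
    have h := hadd 0 0
    rw [add_zero] at h
    exact (left_eq_add.mp h)
  have hneg : ∀ x, t (-x) = - t x := by
    intro x
    have h := hadd x (-x)
    rw [add_neg_cancel, h0] at h
    exact eq_neg_of_add_eq_zero_right h.symm
  have hsub : ∀ x y, t (x - y) = t x - t y := by
    intro x y
    rw [sub_eq_add_neg, hadd, hneg, sub_eq_add_neg]
  intro y hy
  induction hy using AddSubgroup.closure_induction with
  | mem z hz =>
    obtain ⟨a, b, rfl⟩ := hz
    rw [hsub, htr, sub_self]
  | zero => exact h0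
  | add a b _ _ ha hb => rw [hadd, ha, hb, add_zero]
  | neg a _ ha => rw [hneg, ha, neg_zero]

lemma t_sum_single {R : Type*} [NonUnitalRing R] [Module C R]
    (t : ContractedSemigroupRing C G → R)
    (hadd : ∀ x y, t (x + y) = t x + t y)
    (hlin : ∀ (c : C) (f : MonoidAlgebra C G),
      t (toCSR C G (c • f)) = c • t (toCSR C G f))
    (n : ℕ) (g : Fin n → G) (c : Fin n → C) :
    t (∑ i, toCSR C G (MonoidAlgebra.single (g i) (c i))) =
      ∑ i, c i • t (toCSR C G (MonoidAlgebra.single (g i) 1)) := by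
  calc t (∑ i, toCSR C G (MonoidAlgebra.single (g i) (c i)))
      = ∑ i, t (toCSR C G (MonoidAlgebra.single (g i) (c i))) :=
        map_sum (AddMonoidHom.mk' t hadd) _ _
    _ = ∑ i, c i • t (toCSR C G (MonoidAlgebra.single (g i) 1)) := by
        refine Finset.sum_congr rfl fun i _ => ?_
        rw [show MonoidAlgebra.single (g i) (c i)
            = c i • MonoidAlgebra.single (g i) (1 : C) from by
          rw [MonoidAlgebra.smul_single', mul_one], hlin]

open Classical in
lemma decomp (f : MonoidAlgebra C G) (n : ℕ) (g : Fin n → G)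
    (hg0 : ∀ i, ¬ sim (g i) 0)
    (hgij : ∀ i j, i ≠ j → ¬ sim (g i) (g j))
    (hcom : ∀ h ∈ f.coeff.support, ¬ sim h 0 → ∃ i, sim h (g i)) :
    toCSR C G f - ∑ i, toCSR C G (MonoidAlgebra.single (g i) (classSumHom (C := C) (g i) f)) ∈
      commutatorSubgroup (ContractedSemigroupRing C G) := by
  have h1 : toCSR C G f = ∑ h ∈ f.coeff.support, toCSR C G (MonoidAlgebra.single h (f.coeff h)) := by
    conv_lhs => rw [← MonoidAlgebra.sum_coeff_single f]
    rw [Finsupp.sum]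
    exact map_sum (piHom C G) _ _
  have h2 : ∀ i, toCSR C G (MonoidAlgebra.single (g i) (classSumHom (C := C) (g i) f)) =
      ∑ h ∈ f.coeff.support,
        toCSR C G (MonoidAlgebra.single (g i) (if sim h (g i) then f.coeff h else 0)) := by
    intro i
    rw [classSumHom_apply, Finsupp.sum]
    rw [show MonoidAlgebra.single (g i) (∑ h ∈ f.coeff.support, if sim h (g i) then f.coeff h else 0)
        = ∑ h ∈ f.coeff.support, MonoidAlgebra.single (g i) (if sim h (g i) then f.coeff h else 0) from
      map_sum (MonoidAlgebra.singleAddHom (g i)) _ _]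
    exact map_sum (piHom C G) _ _
  have h3 : ∑ i, toCSR C G (MonoidAlgebra.single (g i) (classSumHom (C := C) (g i) f)) =
      ∑ h ∈ f.coeff.support, ∑ i,
        toCSR C G (MonoidAlgebra.single (g i) (if sim h (g i) then f.coeff h else 0)) := by
    rw [Finset.sum_congr rfl fun i _ => h2 i]
    exact Finset.sum_comm
  rw [h1, h3, ← Finset.sum_sub_distrib]
  refine AddSubgroup.sum_mem _ fun h hh => ?_
  by_cases hs : sim h 0
  · have hz : ∀ i : Fin n,
        toCSR C G (MonoidAlgebra.single (g i) (if sim h (g i) then f.coeff h else 0)) = 0 := by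
      intro i
      rw [if_neg (fun hsi => hg0 i (sim_trans (sim_symm hsi) hs)),
        MonoidAlgebra.single_zero, toCSR_zero]
    rw [Finset.sum_eq_zero (fun i _ => hz i), sub_zero]
    have hmem := mem_comm_of_sim (C := C) hs (f.coeff h)
    rwa [toCSR_single_zero, sub_zero] at hmem
  · obtain ⟨i₀, hi₀⟩ := hcom h hh hs
    have hsum : (∑ i, toCSR C G (MonoidAlgebra.single (g i) (if sim h (g i) then f.coeff h else 0)))
        = toCSR C G (MonoidAlgebra.single (g i₀) (f.coeff h)) := by
      rw [Finset.sum_eq_single i₀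
        (fun j _ hj => by
          rw [if_neg (fun hsj => hgij i₀ j (Ne.symm hj)
            (sim_trans (sim_symm hi₀) hsj)), MonoidAlgebra.single_zero, toCSR_zero])
        (fun hm => absurd (Finset.mem_univ i₀) hm)]
      rw [if_pos hi₀]
    rw [hsum]
    exact mem_comm_of_sim hi₀ (f.coeff h)

end Aux

/-- A `C`-linear trace `t : \overline{CG} → R` is minimal if and only if
for all `g₁, …, gₙ ∈ G` with no `gᵢ ~ 0` and `gᵢ ≁ gⱼ` for `i ≠ j`, the elements
`t(π(1·g₁)), …, t(π(1·gₙ))` are `C`-linearly independent in `R`. -/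
theorem semigroupRing_trace_minimal_iff
    {C G R : Type*} [CommRing C] [SemigroupWithZero G]
    [NonUnitalRing R] [Module C R] [SMulCommClass C R R] [IsScalarTower C R R]
    (t : ContractedSemigroupRing C G → R)
    (hadd : ∀ x y : ContractedSemigroupRing C G, t (x + y) = t x + t y)
    (htrace : ∀ x y : ContractedSemigroupRing C G, t (x * y) = t (y * x))
    (hlin : ∀ (c : C) (f : MonoidAlgebra C G),
      t (toCSR C G (c • f)) = c • t (toCSR C G f)) :
    (∀ x : ContractedSemigroupRing C G, t x = 0 →
        x ∈ commutatorSubgroup (ContractedSemigroupRing C G)) ↔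
      ∀ (n : ℕ) (g : Fin n → G),
        (∀ i, ¬ sim (g i) 0) →
        (∀ i j, i ≠ j → ¬ sim (g i) (g j)) →
        ∀ c : Fin n → C,
          (∑ i, c i • t (toCSR C G (MonoidAlgebra.single (g i) 1))) = 0 →
          ∀ i, c i = 0 := by
  constructor
  · intro hmin n g hg0 hgij c hsum i
    classical
    set f : MonoidAlgebra C G := ∑ j, MonoidAlgebra.single (g j) (c j) with hf
    have htf : t (toCSR C G f) = 0 := by
      have he : toCSR C G f = ∑ j, toCSR C G (MonoidAlgebra.single (g j) (c j)) :=
        map_sum (piHom C G) _ _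
      rw [he, t_sum_single t hadd hlin n g c]
      exact hsum
    obtain ⟨k, hk, hik⟩ := exists_lift_of_mem_comm f (hmin _ htf)
    have hcf : classSumHom (C := C) (g i) f = 0 := by
      have e1 : f = k + (f - k) := by abel
      rw [e1, map_add, classSumHom_eq_zero_of_mem_comm hk,
        classSumHom_eq_zero_of_mem_I0 (hg0 i) hik, add_zero]
    have hcf2 : classSumHom (C := C) (g i) f = c i := by
      rw [hf, map_sum]
      rw [Finset.sum_congr rfl fun j _ => classSumHom_single (g i) (g j) (c j)]
      rw [Finset.sum_eq_single i (fun j _ hj => if_neg (hgij j i hj))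
        (fun hm => absurd (Finset.mem_univ i) hm)]
      exact if_pos (sim_refl _)
    exact hcf2.symm.trans hcf
  · intro hind x hx
    classical
    obtain ⟨f, rfl⟩ : ∃ f : MonoidAlgebra C G, toCSR C G f = x :=
      ⟨Quotient.out x, Quotient.out_eq x⟩
    set S : Finset (Quotient (simSetoid G)) :=
      (f.coeff.support.image (Quotient.mk (simSetoid G))).filter
        (fun q => q ≠ Quotient.mk (simSetoid G) 0) with hS
    set n := S.card with hn
    set e := S.equivFin with he
    set g : Fin n → G := fun i => ((e.symm i) : Quotient (simSetoid G)).out with hg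
    have hmk : ∀ i, Quotient.mk (simSetoid G) (g i) = (e.symm i).1 :=
      fun i => Quotient.out_eq _
    have hg0 : ∀ i, ¬ sim (g i) 0 := by
      intro i hsim
      have h1 : Quotient.mk (simSetoid G) (g i) = Quotient.mk (simSetoid G) 0 :=
        Quotient.sound' hsim
      have h2 : ((e.symm i : {x // x ∈ S}) : Quotient (simSetoid G)) ∈
          (f.coeff.support.image (Quotient.mk (simSetoid G))).filter
            (fun q => q ≠ Quotient.mk (simSetoid G) 0) := (e.symm i).2
      exact (Finset.mem_filter.mp h2).2 ((hmk i).symm.trans h1)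
    have hgij : ∀ i j, i ≠ j → ¬ sim (g i) (g j) := by
      intro i j hij hsim
      have h1 : Quotient.mk (simSetoid G) (g i) = Quotient.mk (simSetoid G) (g j) :=
        Quotient.sound' hsim
      rw [hmk i, hmk j] at h1
      exact hij (e.symm.injective (Subtype.ext h1))
    have hcom : ∀ h ∈ f.coeff.support, ¬ sim h 0 → ∃ i, sim h (g i) := by
      intro h hh hns
      have hqS : Quotient.mk (simSetoid G) h ∈ S := by
        show Quotient.mk (simSetoid G) h ∈
          (f.coeff.support.image (Quotient.mk (simSetoid G))).filter
            (fun q => q ≠ Quotient.mk (simSetoid G) 0)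
        exact Finset.mem_filter.mpr
          ⟨Finset.mem_image_of_mem _ hh, fun heq => hns (Quotient.exact' heq)⟩
      refine ⟨e ⟨_, hqS⟩, ?_⟩
      have h1 : e.symm (e ⟨_, hqS⟩) = ⟨Quotient.mk (simSetoid G) h, hqS⟩ :=
        e.symm_apply_apply _
      have h2 : g (e ⟨_, hqS⟩) = (Quotient.mk (simSetoid G) h).out := by
        show ((e.symm (e ⟨_, hqS⟩) : {x // x ∈ S}) : Quotient (simSetoid G)).out = _
        rw [h1]
      rw [h2]
      exact sim_symm (Quotient.mk_out (s := simSetoid G) h)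
    have hdec := decomp f n g hg0 hgij hcom
    have ht2 : t (∑ i, toCSR C G
        (MonoidAlgebra.single (g i) (classSumHom (C := C) (g i) f))) = 0 := by
      have hv := trace_vanish_on_comm t hadd htrace _ hdec
      rw [t_sub t hadd] at hv
      exact (sub_eq_zero.mp hv).symm.trans hx
    have ht3 : (∑ i, classSumHom (C := C) (g i) f •
        t (toCSR C G (MonoidAlgebra.single (g i) 1))) = 0 :=
      (t_sum_single t hadd hlin n g (fun i => classSumHom (C := C) (g i) f)).symm.trans ht2
    have hall : ∀ i, classSumHom (C := C) (g i) f = 0 :=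
      hind n g hg0 hgij (fun i => classSumHom (C := C) (g i) f) ht3
    have hzero : (∑ i, toCSR C G
        (MonoidAlgebra.single (g i) (classSumHom (C := C) (g i) f))) = 0 :=
      Finset.sum_eq_zero fun i _ => by
        rw [hall i, MonoidAlgebra.single_zero, toCSR_zero]
    rw [hzero, sub_zero] at hdec
    exact hdec
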